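/- Fix a real number u > 0 and m_c ∈ ℝ, and define g : ℝ → ℝ by g(m) = (2/π)·arctan(u/(m − m_c)²) for m ≠ m_c and g(m_c) = 1. Then g is twice differentiable at m_c, its first derivative at m_c vanishes, and its second derivative at m_c equals −4/(π·u). -/

import Mathlib

open Real

private lemma hasDerivAt_q (u mc m : ℝ) :
    HasDerivAt (fun m : ℝ => (m - mc) ^ 2 / u) (2 * (m - mc) / u) m := by
  have h := (((hasDerivAt_id m).sub_const mc).pow 2).div_const u
  refine h.congr_deriv ?_
  simp [id]

private lemma hasDerivAt_h (u mc : ℝ) (m : ℝ) :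
    HasDerivAt (fun m : ℝ => 1 - (2 / π) * arctan ((m - mc) ^ 2 / u))
      (-(4 / (π * u)) * ((m - mc) / (1 + ((m - mc) ^ 2 / u) ^ 2))) m := by
  have h1 : HasDerivAt (fun m : ℝ => arctan ((m - mc) ^ 2 / u))
      ((1 / (1 + ((m - mc) ^ 2 / u) ^ 2)) * (2 * (m - mc) / u)) m :=
    (Real.hasDerivAt_arctan _).comp m (hasDerivAt_q u mc m)
  have h2 := (h1.const_mul (2 / π)).const_sub 1
  refine h2.congr_deriv ?_
  field_simp
  ring

/-- The function `g(m) = (2/π) arctan(u/(m−m_c)²)`, extended by `1` at `m_c`, is twice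
differentiable at `m_c` with vanishing first derivative and second derivative
`−4/(πu)`. -/
theorem arctan_counterexample_second_deriv (u mc : ℝ) (hu : 0 < u) (g : ℝ → ℝ)
    (hg : ∀ m, m ≠ mc → g m = (2 / π) * arctan (u / (m - mc) ^ 2))
    (hgc : g mc = 1) :
    HasDerivAt g 0 mc ∧ HasDerivAt (deriv g) (-4 / (π * u)) mc := by
  have hpi : (π : ℝ) ≠ 0 := Real.pi_ne_zero
  -- g equals the smooth function h everywhere
  have hgh : g = fun m : ℝ => 1 - (2 / π) * arctan ((m - mc) ^ 2 / u) := by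
    funext m
    by_cases hm : m = mc
    · subst hm; simp [hgc, hpi]
    · have hm0 : m - mc ≠ 0 := sub_ne_zero.mpr hm
      have hsq : (0 : ℝ) < (m - mc) ^ 2 := by positivity
      have hx : (0 : ℝ) < (m - mc) ^ 2 / u := div_pos hsq hu
      have hinv : u / (m - mc) ^ 2 = ((m - mc) ^ 2 / u)⁻¹ := by
        field_simp
      rw [hg m hm, hinv, Real.arctan_inv_of_pos hx]
      field_simp
    -- derivative function
  have hD : deriv g = fun m : ℝ =>
      -(4 / (π * u)) * ((m - mc) / (1 + ((m - mc) ^ 2 / u) ^ 2)) := by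
    funext m
    rw [hgh]
    exact (hasDerivAt_h u mc m).deriv
  constructor
  · rw [hgh]
    have := hasDerivAt_h u mc mc
    simpa using this
  · rw [hD]
    -- differentiate D at mc
    have hn : HasDerivAt (fun m : ℝ => m - mc) 1 mc := (hasDerivAt_id mc).sub_const mc
    have hd : HasDerivAt (fun m : ℝ => 1 + ((m - mc) ^ 2 / u) ^ 2)
        (2 * ((mc - mc) ^ 2 / u) * (2 * (mc - mc) / u)) mc := by
      have := ((hasDerivAt_q u mc mc).pow 2).const_add 1
      refine this.congr_deriv ?_
      ring
    have hdne : (1 : ℝ) + ((mc - mc) ^ 2 / u) ^ 2 ≠ 0 := by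
      simp
    have hdiv := (hn.div hd hdne).const_mul (-(4 / (π * u)))
    refine hdiv.congr_deriv ?_
    field_simp
    ring
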